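/- Suppose z ∈ Z(𝓗). If x, x′ ∈ W̃ are laterally conjugate, then z_x = z_{x′}. -/

import Mathlib

section

variable {B W Ω : Type*} [Group W] [Group Ω] {M : CoxeterMatrix B}

/-- The length function on `W̃ = W ⋊ Ω`, extending the Coxeter length of `(W, S)` by
`ℓ(wτ) = ℓ(w)`. -/
noncomputable def extLen (cs : CoxeterSystem M W) {φ : Ω →* MulAut W}
    (x : W ⋊[φ] Ω) : ℕ := cs.length x.left

/-- `x ∈ W̃` is a simple reflection, i.e. an element of `S` viewed inside `W̃`. -/
def IsSimpleElt (cs : CoxeterSystem M W) {φ : Ω →* MulAut W} (x : W ⋊[φ] Ω) : Prop :=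
  ∃ i : B, x = SemidirectProduct.inl (cs.simple i)

/-- The sequence of iterated conjugates `x, s₁xs₁, s₂s₁xs₁s₂, …`. -/
def conjSeqW {φ : Ω →* MulAut W} (x : W ⋊[φ] Ω) (ss : ℕ → W ⋊[φ] Ω) : ℕ → W ⋊[φ] Ω
  | 0 => x
  | n + 1 => ss n * conjSeqW x ss n * ss n

/-- `x` and `x′` are laterally conjugate: `x′` is obtained from `x` by a sequence of
length-preserving conjugations by simple reflections. -/
noncomputable def LaterallyConj (cs : CoxeterSystem M W) {φ : Ω →* MulAut W}
    (x x' : W ⋊[φ] Ω) : Prop :=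
  ∃ (n : ℕ) (ss : ℕ → W ⋊[φ] Ω), (∀ i < n, IsSimpleElt cs (ss i)) ∧
    (∀ i < n, extLen cs (conjSeqW x ss (i + 1)) = extLen cs x) ∧ x' = conjSeqW x ss n

/-- `x` has the Direct Diamond Property. -/
noncomputable def DirectDiamond (cs : CoxeterSystem M W) {φ : Ω →* MulAut W}
    (x : W ⋊[φ] Ω) : Prop :=
  ∃ s : W ⋊[φ] Ω, IsSimpleElt cs s ∧ extLen cs x < extLen cs (s * x) ∧
    extLen cs x < extLen cs (x * s) ∧ s * x * s ≠ x

/-- `x` has the Diamond Property: it is laterally conjugate to an element with the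
Direct Diamond Property. -/
noncomputable def Diamond (cs : CoxeterSystem M W) {φ : Ω →* MulAut W}
    (x : W ⋊[φ] Ω) : Prop :=
  ∃ x' : W ⋊[φ] Ω, LaterallyConj cs x x' ∧ DirectDiamond cs x'

end



open List

namespace StatementAux

variable {B : Type*} {W : Type*} [Group W] {M : CoxeterMatrix B} (cs : CoxeterSystem M W)

local prefix:100 "s" => cs.simple
local prefix:100 "π" => cs.wordProd
local prefix:100 "ℓ" => cs.length
local prefix:100 "ris" => cs.rightInvSeq

/-- `chi w t` is `-1` if `t = w` and `1` otherwise. -/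
noncomputable def chi (w t : W) : ℤˣ :=
  @ite _ (t = w) (Classical.propDecidable _) (-1) 1

lemma chi_of_eq {w t : W} (h : t = w) : chi w t = -1 := by rw [chi, if_pos h]

lemma chi_of_ne {w t : W} (h : t ≠ w) : chi w t = 1 := by rw [chi, if_neg h]

lemma chi_mul_self (w t : W) : chi w t * chi w t = 1 := by
  by_cases h : t = w
  · rw [chi_of_eq h]; decide
  · rw [chi_of_ne h]; decide

lemma chi_congr (w : W) {t t' : W} (h : t = w ↔ t' = w) : chi w t = chi w t' := by
  by_cases ht : t = w
  · rw [chi_of_eq ht, chi_of_eq (h.mp ht)]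
  · rw [chi_of_ne ht, chi_of_ne (fun hc => ht (h.mpr hc))]

lemma conj_simple_eq_iff (i : B) (x : W) : s i * x * s i = s i ↔ x = s i := by
  constructor
  · intro h
    have h0 : s i * (x * s i) = s i * 1 := by rw [mul_one, ← mul_assoc]; exact h
    have h' : x * s i = 1 := mul_left_cancel h0
    have h'' : x = (s i)⁻¹ := eq_inv_of_mul_eq_one_left h'
    rw [h'', cs.inv_simple]
  · intro h
    rw [h, cs.simple_mul_simple_self, one_mul]

/-- The Tits sign permutation attached to a simple reflection. -/
noncomputable def eta (i : B) : Equiv.Perm (W × ℤˣ) :=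
  Function.Involutive.toPerm
    (fun p => (s i * p.1 * s i, p.2 * chi (s i) p.1))
    (by
      intro p
      obtain ⟨x, e⟩ := p
      dsimp only
      have h1 : s i * (s i * x * s i) * s i = x := by
        rw [show s i * (s i * x * s i) * s i = (s i * s i) * x * (s i * s i) by group,
          cs.simple_mul_simple_self, one_mul, mul_one]
      have h2 : chi (s i) (s i * x * s i) = chi (s i) x :=
        chi_congr _ (conj_simple_eq_iff cs i x)
      rw [h1, h2, mul_assoc, chi_mul_self, mul_one])

lemma eta_apply (i : B) (p : W × ℤˣ) :
    eta cs i p = (s i * p.1 * s i, p.2 * chi (s i) p.1) := rfl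

/-- The sign of `w` in the right inversion sequence of `ω`. -/
noncomputable def signProd (ω : List B) (w : W) : ℤˣ :=
  ((ris ω).map (chi w)).prod

@[simp] lemma signProd_nil (w : W) : signProd cs [] w = 1 := rfl

lemma signProd_cons (i : B) (ω : List B) (w : W) :
    signProd cs (i :: ω) w
      = chi w ((π ω)⁻¹ * s i * π ω) * signProd cs ω w := by
  simp [signProd, CoxeterSystem.rightInvSeq]

lemma prod_map_eta (ω : List B) (p : W × ℤˣ) :
    ((ω.map (eta cs)).prod) p = (π ω * p.1 * (π ω)⁻¹, p.2 * signProd cs ω p.1) := by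
  induction ω with
  | nil => simp
  | cons i ω ih =>
    have hprod : ((i :: ω).map (eta cs)).prod = eta cs i * (ω.map (eta cs)).prod := by simp
    rw [hprod]
    have hstep : (eta cs i * (ω.map (eta cs)).prod) p
        = eta cs i ((ω.map (eta cs)).prod p) := rfl
    rw [hstep, ih, eta_apply, signProd_cons]
    have hcond : chi (s i) (π ω * p.1 * (π ω)⁻¹)
        = chi p.1 ((π ω)⁻¹ * s i * π ω) := by
      by_cases h : π ω * p.1 * (π ω)⁻¹ = s i
      · rw [chi_of_eq h, chi_of_eq]
        rw [← h]; group
      · rw [chi_of_ne h, chi_of_ne]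
        intro hc
        apply h
        rw [← hc]; group
    refine Prod.ext ?_ ?_
    · show s i * (π ω * p.1 * (π ω)⁻¹) * s i = π (i :: ω) * p.1 * (π (i :: ω))⁻¹
      rw [cs.wordProd_cons, mul_inv_rev, cs.inv_simple]
      group
    · show p.2 * signProd cs ω p.1 * chi (s i) (π ω * p.1 * (π ω)⁻¹)
        = p.2 * (chi p.1 ((π ω)⁻¹ * s i * π ω) * signProd cs ω p.1)
      rw [hcond, mul_assoc, mul_comm (signProd cs ω p.1)]

section braid

variable (i j : B)

/-- The `n`-th element in the reflection sequence of the dihedral subgroup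
generated by `s i` and `s j`. -/
noncomputable def dihedralRefl (n : ℕ) : W :=
  (π (CoxeterSystem.alternatingWord i j n))⁻¹ * π (CoxeterSystem.alternatingWord i j (n + 1))

lemma dihedralRefl_eq (n : ℕ) :
    dihedralRefl cs i j n = ((s i * s j) ^ (n / 2))⁻¹ * (s j * (s i * s j) ^ ((n + 1) / 2)) := by
  unfold dihedralRefl
  rcases Nat.even_or_odd n with he | ho
  · have h1 : ¬ Even (n + 1) := by simp [Nat.even_add_one, he]
    obtain ⟨k, rfl⟩ := he
    have h2 : (k + k + 1) / 2 = (k + k) / 2 := by omega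
    rw [cs.prod_alternatingWord_eq_mul_pow, cs.prod_alternatingWord_eq_mul_pow,
      if_pos (Even.add_self k), if_neg h1, h2]
    group
  · have h1 : ¬ Even n := Nat.not_even_iff_odd.2 ho
    have h2 : Even (n + 1) := by simpa [Nat.even_add_one] using h1
    obtain ⟨k, rfl⟩ := ho
    have h3 : (2 * k + 1 + 1) / 2 = (2 * k + 1) / 2 + 1 := by omega
    rw [cs.prod_alternatingWord_eq_mul_pow, cs.prod_alternatingWord_eq_mul_pow,
      if_neg h1, if_pos h2, h3, mul_inv_rev, cs.inv_simple, pow_succ]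
    group

lemma simple_conj_pow (k : ℕ) :
    s j * (s i * s j) ^ k = ((s i * s j) ^ k)⁻¹ * s j := by
  induction k with
  | zero => simp
  | succ k ih =>
    have hbase : s j * (s i * s j) = (s i * s j)⁻¹ * s j := by
      rw [mul_inv_rev, cs.inv_simple, cs.inv_simple, mul_assoc]
    rw [pow_succ, ← mul_assoc, ih, mul_assoc, hbase, ← mul_assoc, ← mul_inv_rev,
      ← pow_succ', ← pow_succ]

lemma dihedralRefl_periodic (m : ℕ) (hm : (s i * s j) ^ m = 1) (n : ℕ) :
    dihedralRefl cs i j (n + m) = dihedralRefl cs i j n := by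
  rw [dihedralRefl_eq, dihedralRefl_eq, simple_conj_pow, simple_conj_pow]
  rw [← mul_assoc, ← mul_inv_rev, ← pow_add, ← mul_assoc, ← mul_inv_rev, ← pow_add]
  have h1 : (n + m + 1) / 2 + (n + m) / 2 = n + m := by omega
  have h2 : (n + 1) / 2 + n / 2 = n := by omega
  rw [h1, h2, pow_add, hm, mul_one]

lemma ris_alternatingWord (n : ℕ) :
    ris (CoxeterSystem.alternatingWord i j n)
      = ((List.range n).reverse).map (dihedralRefl cs i j) := by
  induction n with
  | zero => simp [CoxeterSystem.alternatingWord]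
  | succ n ih =>
    rw [CoxeterSystem.alternatingWord_succ' i j]
    have hhead : (π (CoxeterSystem.alternatingWord i j n))⁻¹
        * s (if Even n then j else i) * π (CoxeterSystem.alternatingWord i j n)
        = dihedralRefl cs i j n := by
      unfold dihedralRefl
      rw [CoxeterSystem.alternatingWord_succ' i j, cs.wordProd_cons]
      group
    show ((π (CoxeterSystem.alternatingWord i j n))⁻¹
        * s (if Even n then j else i) * π (CoxeterSystem.alternatingWord i j n))
        :: ris (CoxeterSystem.alternatingWord i j n) = _
    rw [hhead, ih, List.range_succ, List.reverse_append]
    simp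

lemma prod_map_eta_alternating (m : ℕ) :
    ((CoxeterSystem.alternatingWord i j (2 * m)).map (eta cs)).prod
      = (eta cs i * eta cs j) ^ m := by
  induction m with
  | zero => simp [CoxeterSystem.alternatingWord]
  | succ m ih =>
    have h2 : 2 * (m + 1) = (2 * m + 1) + 1 := by ring
    rw [h2, CoxeterSystem.alternatingWord_succ' i j, CoxeterSystem.alternatingWord_succ' i j]
    have he1 : ¬ Even (2 * m + 1) := by simp [Nat.even_add_one]
    have he2 : Even (2 * m) := even_two_mul m
    rw [if_neg he1, if_pos he2]
    simp only [List.map_cons, List.prod_cons]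
    rw [ih, pow_succ', ← mul_assoc]

lemma eta_liftable : CoxeterMatrix.IsLiftable M (eta cs) := by
  intro i j
  set m := M i j with hm
  have hp : (s i * s j) ^ m = 1 := cs.simple_mul_simple_pow i j
  rw [← prod_map_eta_alternating]
  apply Equiv.ext
  intro p
  rw [prod_map_eta]
  have hπ : π (CoxeterSystem.alternatingWord i j (2 * m)) = 1 := by
    rw [cs.prod_alternatingWord_eq_mul_pow, if_pos (even_two_mul m)]
    have h2 : 2 * m / 2 = m := by omega
    rw [h2, one_mul, hp]
  have hsign : signProd cs (CoxeterSystem.alternatingWord i j (2 * m)) p.1 = 1 := by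
    unfold signProd
    rw [ris_alternatingWord, List.map_reverse, List.map_reverse, List.prod_reverse, List.map_map]
    have h2m : 2 * m = m + m := by ring
    rw [h2m, List.range_add, List.map_append, List.prod_append, List.map_map]
    have hcomp : ((chi p.1) ∘ dihedralRefl cs i j) ∘ (fun k => m + k)
        = (chi p.1) ∘ dihedralRefl cs i j := by
      funext k
      simp only [Function.comp_apply]
      rw [Nat.add_comm m k, dihedralRefl_periodic cs i j m hp k]
    rw [hcomp, ← sq]
    exact Int.units_sq _
  rw [hπ, hsign]
  simp

end braid

/-- The Tits sign representation. -/
noncomputable def titsRep : W →* Equiv.Perm (W × ℤˣ) :=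
  CoxeterSystem.lift cs ⟨eta cs, eta_liftable cs⟩

lemma titsRep_simple (i : B) : titsRep cs (s i) = eta cs i :=
  cs.lift_apply_simple _ i

lemma titsRep_wordProd (ω : List B) : titsRep cs (π ω) = (ω.map (eta cs)).prod := by
  induction ω with
  | nil => simp [titsRep]
  | cons i ω ih => rw [cs.wordProd_cons, map_mul, titsRep_simple, List.map_cons,
      List.prod_cons, ih]

lemma signProd_eq_of_wordProd_eq {ω ω' : List B} (h : π ω = π ω') (x : W) :
    signProd cs ω x = signProd cs ω' x := by
  have h1 := prod_map_eta cs ω (x, 1)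
  have h2 := prod_map_eta cs ω' (x, 1)
  rw [← titsRep_wordProd] at h1 h2
  rw [h] at h1
  rw [h1] at h2
  have := congrArg Prod.snd h2
  simpa using this

lemma signProd_eq_neg_one {ω : List B} {i : B} (hred : ℓ (π ω * s i) < ℓ (π ω)) :
    signProd cs ω (s i) = -1 := by
  obtain ⟨ω', hlen, hval⟩ := cs.exists_reduced_word (π ω * s i)
  have hred' : cs.IsReduced ω' := hlen
  have hπ : π (ω'.concat i) = π ω := by
    rw [cs.wordProd_concat, ← hval, mul_assoc, cs.simple_mul_simple_self, mul_one]
  rw [← signProd_eq_of_wordProd_eq cs hπ]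
  unfold signProd
  rw [cs.rightInvSeq_concat, List.concat_eq_append, List.map_append, List.prod_append]
  have hnotmem : s i ∉ ris ω' := by
    intro hmem
    have hinv := (cs.isRightInversion_of_mem_rightInvSeq hred' hmem).2
    rw [← hval, mul_assoc, cs.simple_mul_simple_self, mul_one] at hinv
    omega
  have hone : ((List.map (MulAut.conj (s i)) (ris ω')).map (chi (s i))).prod = 1 := by
    apply List.prod_eq_one
    intro u hu
    rw [List.map_map] at hu
    obtain ⟨t, ht, rfl⟩ := List.mem_map.mp hu
    simp only [Function.comp_apply, MulAut.conj_apply, cs.inv_simple]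
    apply chi_of_ne
    intro hc
    apply hnotmem
    rwa [(conj_simple_eq_iff cs i t).mp hc] at ht
  rw [hone, one_mul]
  simp [chi_of_eq]

lemma mem_ris_of_descent {ω : List B} (hred : cs.IsReduced ω) {i : B}
    (h : ℓ (π ω * s i) < ℓ (π ω)) : s i ∈ ris ω := by
  by_contra hmem
  have h1 : signProd cs ω (s i) = -1 := signProd_eq_neg_one cs h
  have h2 : signProd cs ω (s i) = 1 := by
    unfold signProd
    apply List.prod_eq_one
    intro u hu
    obtain ⟨t, ht, rfl⟩ := List.mem_map.mp hu
    exact chi_of_ne (fun hc => hmem (hc ▸ ht))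
  rw [h1] at h2
  exact absurd h2 (by decide)

/-- The key exchange-type lemma: if `ℓ(u sᵢ) > ℓ(u)`, `ℓ(sⱼ u) > ℓ(u)` and
`ℓ(sⱼ u sᵢ) < ℓ(sⱼ u)` then `sⱼ u sᵢ = u`. -/
lemma exchange_key {u : W} {i j : B} (h1 : ℓ u < ℓ (u * s i)) (h2 : ℓ u < ℓ (s j * u))
    (h3 : ℓ (s j * u * s i) < ℓ (s j * u)) : s j * u * s i = u := by
  obtain ⟨ωu, hlen, hval⟩ := cs.exists_reduced_word u
  have hlen2 : ℓ (s j * u) = ℓ u + 1 := by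
    rcases cs.length_simple_mul u j with h | h
    · exact h
    · omega
  have hredcons : cs.IsReduced (j :: ωu) := by
    rw [CoxeterSystem.IsReduced, cs.wordProd_cons, ← hval, hlen2, List.length_cons, hval]
    exact congrArg (· + 1) hlen
  have hπ : π (j :: ωu) = s j * u := by rw [cs.wordProd_cons, ← hval]
  have hmem : s i ∈ ris (j :: ωu) := by
    apply mem_ris_of_descent cs hredcons
    rw [hπ]
    exact h3
  have hris : ris (j :: ωu) = ((π ωu)⁻¹ * s j * π ωu) :: ris ωu := rfl
  rw [hris] at hmem
  rcases List.mem_cons.mp hmem with hc | hc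
  · rw [← hval] at hc
    rw [hc, show s j * u * (u⁻¹ * s j * u) = (s j * s j) * u by group,
      cs.simple_mul_simple_self, one_mul]
  · exfalso
    have hredu : cs.IsReduced ωu := hlen
    have := (cs.isRightInversion_of_mem_rightInvSeq hredu hc).2
    rw [← hval] at this
    omega

/-- In the "bad case" of the lateral conjugation argument the conjugate equals
the original element. -/
lemma bad_case {w : W} {i j : B} (h1 : ℓ (s i * w) < ℓ w) (h2 : ℓ (w * s j) < ℓ w)
    (h3 : ℓ (s i * w * s j) = ℓ w) : s i * w * s j = w := by
  have hlen : ℓ (s i * w) + 1 = ℓ w := by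
    rcases cs.length_simple_mul w i with h | h
    · omega
    · omega
  have key := exchange_key cs (u := s i * w) (i := j) (j := i)
    (by omega)
    (by rw [cs.simple_mul_simple_cancel_left]; omega)
    (by rw [cs.simple_mul_simple_cancel_left]; omega)
  -- key : s i * (s i * w) * s j = s i * w
  rw [cs.simple_mul_simple_cancel_left] at key
  -- key : w * s j = s i * w
  rw [mul_assoc, key, cs.simple_mul_simple_cancel_left]

end StatementAux


section HeckeAux

open SemidirectProduct

variable {B W Ω H : Type*} [Group W] [Group Ω] [Ring H] [Algebra ℂ H]
  {M : CoxeterMatrix B} (cs : CoxeterSystem M W) {φ : Ω →* MulAut W}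

lemma sd_left_inl_mul (a : W) (y : W ⋊[φ] Ω) :
    (SemidirectProduct.inl a * y).left = a * y.left := by
  simp [SemidirectProduct.mul_left]

lemma sd_left_mul_inl (y : W ⋊[φ] Ω) (a : W) :
    (y * SemidirectProduct.inl a).left = y.left * φ y.right a := by
  simp [SemidirectProduct.mul_left]

lemma sd_right_inl_mul (a : W) (y : W ⋊[φ] Ω) :
    (SemidirectProduct.inl a * y).right = y.right := by
  simp [SemidirectProduct.mul_right]

lemma extLen_simple_mul_ne {s0 : W ⋊[φ] Ω} (hs : IsSimpleElt cs s0) (y : W ⋊[φ] Ω) :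
    extLen cs (s0 * y) ≠ extLen cs y := by
  obtain ⟨i, rfl⟩ := hs
  have h := cs.length_simple_mul_ne y.left i
  simpa [extLen, sd_left_inl_mul] using h

lemma extLen_mul_simple_ne (hφ : ∀ (τ : Ω) (i : B), ∃ j : B, φ τ (cs.simple i) = cs.simple j)
    {s0 : W ⋊[φ] Ω} (hs : IsSimpleElt cs s0) (y : W ⋊[φ] Ω) :
    extLen cs (y * s0) ≠ extLen cs y := by
  obtain ⟨i, rfl⟩ := hs
  obtain ⟨j, hj⟩ := hφ y.right i
  have h := cs.length_mul_simple_ne y.left j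
  simpa [extLen, sd_left_mul_inl, hj] using h

lemma simple_sq (cs : CoxeterSystem M W) {s0 : W ⋊[φ] Ω} (hs : IsSimpleElt cs s0) :
    s0 * s0 = 1 := by
  obtain ⟨i, rfl⟩ := hs
  rw [← map_mul, cs.simple_mul_simple_self, map_one]

/-- Coefficient formula for right multiplication by `T s`. -/
lemma coeffR (T : Module.Basis (W ⋊[φ] Ω) ℂ H) (q : W ⋊[φ] Ω → ℕ)
    (hTright : ∀ s x : W ⋊[φ] Ω, IsSimpleElt cs s →
      (extLen cs x < extLen cs (x * s) → T x * T s = T (x * s)) ∧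
      (extLen cs (x * s) < extLen cs x →
        T x * T s = ((q s : ℂ) - 1) • T x + (q s : ℂ) • T (x * s)))
    {s0 : W ⋊[φ] Ω} (hs : IsSimpleElt cs s0)
    (hne : ∀ y : W ⋊[φ] Ω, extLen cs (y * s0) ≠ extLen cs y)
    (z : H) {u : W ⋊[φ] Ω} (hu : extLen cs (u * s0) < extLen cs u) :
    T.repr (z * T s0) u = T.repr z (u * s0) + ((q s0 : ℂ) - 1) * T.repr z u := by
  classical
  have hs2 : s0 * s0 = 1 := simple_sq cs hs
  have husne : u * s0 ≠ u := fun h => hne u (by rw [h])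
  have hz : z * T s0 = (T.repr z).sum fun y c => c • (T y * T s0) := by
    conv_lhs => rw [← T.linearCombination_repr z]
    rw [Finsupp.linearCombination_apply, Finsupp.sum_mul]
    simp only [smul_mul_assoc]
  have hys : ∀ y : W ⋊[φ] Ω, y * s0 = u ↔ y = u * s0 := by
    intro y
    constructor
    · intro h; rw [← h, mul_assoc, hs2, mul_one]
    · intro h; rw [h, mul_assoc, hs2, mul_one]
  have hpt : ∀ y : W ⋊[φ] Ω, (T.repr (T y * T s0)) u
      = (if y = u * s0 then 1 else 0) + (if y = u then ((q s0 : ℂ) - 1) else 0) := by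
    intro y
    rcases lt_or_gt_of_ne (hne y) with hlt | hgt
    · rw [(hTright s0 y hs).2 hlt]
      rw [map_add, map_smul, map_smul, Finsupp.add_apply, Finsupp.smul_apply,
        Finsupp.smul_apply, T.repr_self_apply, T.repr_self_apply, smul_eq_mul, smul_eq_mul]
      by_cases hyu : y = u
      · have h1 : ¬ (y * s0 = u) := fun hc => husne (by rw [← (hys y).mp hc, hyu])
        have h2 : ¬ (y = u * s0) := fun hc => h1 ((hys y).mpr hc)
        rw [if_pos hyu, if_neg h1, if_neg h2, if_pos hyu]
        ring
      · have h2 : ¬ (y = u * s0) := by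
          intro hc
          rw [hc] at hlt
          rw [mul_assoc, hs2, mul_one] at hlt
          omega
        have h1 : ¬ (y * s0 = u) := fun hc => h2 ((hys y).mp hc)
        rw [if_neg hyu, if_neg h1, if_neg h2, if_neg hyu]
        ring
    · rw [(hTright s0 y hs).1 hgt, T.repr_self_apply]
      by_cases hyu : y = u
      · exfalso
        rw [hyu] at hgt
        omega
      · by_cases h2 : y = u * s0
        · have h1 : y * s0 = u := (hys y).mpr h2
          rw [if_pos h1, if_pos h2, if_neg hyu]
          ring
        · have h1 : ¬ (y * s0 = u) := fun hc => h2 ((hys y).mp hc)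
          rw [if_neg h1, if_neg h2, if_neg hyu]
          ring
  rw [hz, map_finsuppSum, Finsupp.sum_apply]
  have hcongr : ((T.repr z).sum fun y c => (T.repr (c • (T y * T s0))) u)
      = (T.repr z).sum fun y c =>
        ((if y = u * s0 then c else 0) + (if y = u then c * ((q s0 : ℂ) - 1) else 0)) := by
    apply Finsupp.sum_congr
    intro y _
    rw [map_smul, Finsupp.smul_apply, smul_eq_mul, hpt y]
    split_ifs <;> ring
  rw [hcongr, Finsupp.sum]
  rw [Finset.sum_add_distrib]
  rw [Finset.sum_ite_eq' (T.repr z).support (u * s0) (fun y => T.repr z y),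
    Finset.sum_ite_eq' (T.repr z).support u (fun y => T.repr z y * ((q s0 : ℂ) - 1))]
  have e1 : (if u * s0 ∈ (T.repr z).support then T.repr z (u * s0) else 0)
      = T.repr z (u * s0) := by
    split_ifs with h
    · rfl
    · rw [Finsupp.notMem_support_iff.mp h]
  have e2 : (if u ∈ (T.repr z).support then T.repr z u * ((q s0 : ℂ) - 1) else 0)
      = T.repr z u * ((q s0 : ℂ) - 1) := by
    split_ifs with h
    · rfl
    · rw [Finsupp.notMem_support_iff.mp h, zero_mul]
  rw [e1, e2, mul_comm]

/-- Coefficient formula for left multiplication by `T s`. -/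
lemma coeffL (T : Module.Basis (W ⋊[φ] Ω) ℂ H) (q : W ⋊[φ] Ω → ℕ)
    (hTleft : ∀ s x : W ⋊[φ] Ω, IsSimpleElt cs s →
      (extLen cs x < extLen cs (s * x) → T s * T x = T (s * x)) ∧
      (extLen cs (s * x) < extLen cs x →
        T s * T x = ((q s : ℂ) - 1) • T x + (q s : ℂ) • T (s * x)))
    {s0 : W ⋊[φ] Ω} (hs : IsSimpleElt cs s0)
    (hne : ∀ y : W ⋊[φ] Ω, extLen cs (s0 * y) ≠ extLen cs y)
    (z : H) {u : W ⋊[φ] Ω} (hu : extLen cs (s0 * u) < extLen cs u) :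
    T.repr (T s0 * z) u = T.repr z (s0 * u) + ((q s0 : ℂ) - 1) * T.repr z u := by
  classical
  have hs2 : s0 * s0 = 1 := simple_sq cs hs
  have husne : s0 * u ≠ u := fun h => hne u (by rw [h])
  have hz : T s0 * z = (T.repr z).sum fun y c => c • (T s0 * T y) := by
    conv_lhs => rw [← T.linearCombination_repr z]
    rw [Finsupp.linearCombination_apply, Finsupp.mul_sum]
    simp only [mul_smul_comm]
  have hys : ∀ y : W ⋊[φ] Ω, s0 * y = u ↔ y = s0 * u := by
    intro y
    constructor
    · intro h; rw [← h, ← mul_assoc, hs2, one_mul]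
    · intro h; rw [h, ← mul_assoc, hs2, one_mul]
  have hpt : ∀ y : W ⋊[φ] Ω, (T.repr (T s0 * T y)) u
      = (if y = s0 * u then 1 else 0) + (if y = u then ((q s0 : ℂ) - 1) else 0) := by
    intro y
    rcases lt_or_gt_of_ne (hne y) with hlt | hgt
    · rw [(hTleft s0 y hs).2 hlt]
      rw [map_add, map_smul, map_smul, Finsupp.add_apply, Finsupp.smul_apply,
        Finsupp.smul_apply, T.repr_self_apply, T.repr_self_apply, smul_eq_mul, smul_eq_mul]
      by_cases hyu : y = u
      · have h1 : ¬ (s0 * y = u) := fun hc => husne (by rw [← (hys y).mp hc, hyu])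
        have h2 : ¬ (y = s0 * u) := fun hc => h1 ((hys y).mpr hc)
        rw [if_pos hyu, if_neg h1, if_neg h2, if_pos hyu]
        ring
      · have h2 : ¬ (y = s0 * u) := by
          intro hc
          rw [hc] at hlt
          rw [← mul_assoc, hs2, one_mul] at hlt
          omega
        have h1 : ¬ (s0 * y = u) := fun hc => h2 ((hys y).mp hc)
        rw [if_neg hyu, if_neg h1, if_neg h2, if_neg hyu]
        ring
    · rw [(hTleft s0 y hs).1 hgt, T.repr_self_apply]
      by_cases hyu : y = u
      · exfalso
        rw [hyu] at hgt
        omega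
      · by_cases h2 : y = s0 * u
        · have h1 : s0 * y = u := (hys y).mpr h2
          rw [if_pos h1, if_pos h2, if_neg hyu]
          ring
        · have h1 : ¬ (s0 * y = u) := fun hc => h2 ((hys y).mp hc)
          rw [if_neg h1, if_neg h2, if_neg hyu]
          ring
  rw [hz, map_finsuppSum, Finsupp.sum_apply]
  have hcongr : ((T.repr z).sum fun y c => (T.repr (c • (T s0 * T y))) u)
      = (T.repr z).sum fun y c =>
        ((if y = s0 * u then c else 0) + (if y = u then c * ((q s0 : ℂ) - 1) else 0)) := by
    apply Finsupp.sum_congr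
    intro y _
    rw [map_smul, Finsupp.smul_apply, smul_eq_mul, hpt y]
    split_ifs <;> ring
  rw [hcongr, Finsupp.sum]
  rw [Finset.sum_add_distrib]
  rw [Finset.sum_ite_eq' (T.repr z).support (s0 * u) (fun y => T.repr z y),
    Finset.sum_ite_eq' (T.repr z).support u (fun y => T.repr z y * ((q s0 : ℂ) - 1))]
  have e1 : (if s0 * u ∈ (T.repr z).support then T.repr z (s0 * u) else 0)
      = T.repr z (s0 * u) := by
    split_ifs with h
    · rfl
    · rw [Finsupp.notMem_support_iff.mp h]
  have e2 : (if u ∈ (T.repr z).support then T.repr z u * ((q s0 : ℂ) - 1) else 0)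
      = T.repr z u * ((q s0 : ℂ) - 1) := by
    split_ifs with h
    · rfl
    · rw [Finsupp.notMem_support_iff.mp h, zero_mul]
  rw [e1, e2, mul_comm]

end HeckeAux

section StepAux

open SemidirectProduct

variable {B W Ω H : Type*} [Group W] [Group Ω] [Ring H] [Algebra ℂ H]
  {M : CoxeterMatrix B} (cs : CoxeterSystem M W) {φ : Ω →* MulAut W}

lemma stepEq (hφ : ∀ (τ : Ω) (i : B), ∃ j : B, φ τ (cs.simple i) = cs.simple j)
    (T : Module.Basis (W ⋊[φ] Ω) ℂ H) (q : W ⋊[φ] Ω → ℕ)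
    (hTleft : ∀ s x : W ⋊[φ] Ω, IsSimpleElt cs s →
      (extLen cs x < extLen cs (s * x) → T s * T x = T (s * x)) ∧
      (extLen cs (s * x) < extLen cs x →
        T s * T x = ((q s : ℂ) - 1) • T x + (q s : ℂ) • T (s * x)))
    (hTright : ∀ s x : W ⋊[φ] Ω, IsSimpleElt cs s →
      (extLen cs x < extLen cs (x * s) → T x * T s = T (x * s)) ∧
      (extLen cs (x * s) < extLen cs x →
        T x * T s = ((q s : ℂ) - 1) • T x + (q s : ℂ) • T (x * s)))
    (z : H) (hzc : ∀ h : H, z * h = h * z)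
    {s0 x : W ⋊[φ] Ω} (hs : IsSimpleElt cs s0)
    (hlat : extLen cs (s0 * x * s0) = extLen cs x) :
    T.repr z (s0 * x * s0) = T.repr z x := by
  have hs2 : s0 * s0 = 1 := simple_sq cs hs
  have hneL : ∀ y : W ⋊[φ] Ω, extLen cs (s0 * y) ≠ extLen cs y :=
    extLen_simple_mul_ne cs hs
  have hneR : ∀ y : W ⋊[φ] Ω, extLen cs (y * s0) ≠ extLen cs y :=
    extLen_mul_simple_ne cs hφ hs
  have hssx : s0 * (s0 * x) = x := by rw [← mul_assoc, hs2, one_mul]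
  have hxss : x * s0 * s0 = x := by rw [mul_assoc, hs2, mul_one]
  rcases lt_or_gt_of_ne (hneL x) with hl | hl
  · rcases lt_or_gt_of_ne (hneR x) with hr | hr
    · -- both descents: the conjugate equals x
      obtain ⟨i, rfl⟩ := hs
      obtain ⟨j, hj⟩ := hφ x.right i
      have hleft : (inl (cs.simple i) * x * inl (cs.simple i)).left
          = cs.simple i * x.left * cs.simple j := by
        rw [sd_left_mul_inl, sd_left_inl_mul, sd_right_inl_mul, hj]
      have hW : cs.simple i * x.left * cs.simple j = x.left := by
        apply StatementAux.bad_case cs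
        · simpa [extLen, sd_left_inl_mul] using hl
        · simpa [extLen, sd_left_mul_inl, hj] using hr
        · simpa [extLen, hleft] using hlat
      have heq : inl (cs.simple i) * x * inl (cs.simple i) = x := by
        apply SemidirectProduct.ext
        · rw [hleft, hW]
        · simp [SemidirectProduct.mul_right]
      rw [heq]
    · -- use u := x * s0
      have hu1 : extLen cs ((x * s0) * s0) < extLen cs (x * s0) := by
        rw [hxss]; exact hr
      have hu2 : extLen cs (s0 * (x * s0)) < extLen cs (x * s0) := by
        rw [← mul_assoc, hlat]; exact hr
      have e1 := coeffR cs T q hTright hs hneR z hu1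
      have e2 := coeffL cs T q hTleft hs hneL z hu2
      rw [hxss] at e1
      rw [← mul_assoc] at e2
      rw [hzc (T s0)] at e1
      exact add_right_cancel (e2.symm.trans e1)
  · -- use u := s0 * x
    have hu1 : extLen cs ((s0 * x) * s0) < extLen cs (s0 * x) := by
      rw [hlat]; exact hl
    have hu2 : extLen cs (s0 * (s0 * x)) < extLen cs (s0 * x) := by
      rw [hssx]; exact hl
    have e1 := coeffR cs T q hTright hs hneR z hu1
    have e2 := coeffL cs T q hTleft hs hneL z hu2
    rw [hssx] at e2
    rw [hzc (T s0)] at e1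
    exact add_right_cancel (e1.symm.trans e2)

end StepAux

/-- central elements have Iwahori–Matsumoto coefficients constant on
lateral-conjugacy classes. -/
theorem statement12 {B W Ω H : Type*} [Group W] [Group Ω] [Ring H] [Algebra ℂ H]
    {M : CoxeterMatrix B} (cs : CoxeterSystem M W) (φ : Ω →* MulAut W)
    (hφ : ∀ (τ : Ω) (i : B), ∃ j : B, φ τ (cs.simple i) = cs.simple j)
    (T : Module.Basis (W ⋊[φ] Ω) ℂ H)
    (q : W ⋊[φ] Ω → ℕ)
    (hq : ∀ s t : W ⋊[φ] Ω, IsSimpleElt cs s → IsSimpleElt cs t → IsConj s t → q s = q t)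
    (hTleft : ∀ s x : W ⋊[φ] Ω, IsSimpleElt cs s →
      (extLen cs x < extLen cs (s * x) → T s * T x = T (s * x)) ∧
      (extLen cs (s * x) < extLen cs x →
        T s * T x = ((q s : ℂ) - 1) • T x + (q s : ℂ) • T (s * x)))
    (hTright : ∀ s x : W ⋊[φ] Ω, IsSimpleElt cs s →
      (extLen cs x < extLen cs (x * s) → T x * T s = T (x * s)) ∧
      (extLen cs (x * s) < extLen cs x →
        T x * T s = ((q s : ℂ) - 1) • T x + (q s : ℂ) • T (x * s)))
    (hTom : ∀ (τ : Ω) (x : W ⋊[φ] Ω),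
      T (SemidirectProduct.inr τ * x) = T (SemidirectProduct.inr τ) * T x ∧
      T (x * SemidirectProduct.inr τ) = T x * T (SemidirectProduct.inr τ))
    (z : H) (hz : z ∈ Set.center H)
    (x x' : W ⋊[φ] Ω) (hlat : LaterallyConj cs x x') :
    T.repr z x = T.repr z x' := by
  obtain ⟨n, ss, hsimp, hlen, hx'⟩ := hlat
  have hzc : ∀ h : H, z * h = h * z := fun h => (Semigroup.mem_center_iff.mp hz h).symm
  have main : ∀ k, k ≤ n → extLen cs (conjSeqW x ss k) = extLen cs x ∧
      T.repr z (conjSeqW x ss k) = T.repr z x := by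
    intro k
    induction k with
    | zero => intro _; exact ⟨rfl, rfl⟩
    | succ k ih =>
      intro hk
      have hk' : k < n := hk
      obtain ⟨ih1, ih2⟩ := ih (le_of_lt hk')
      have hstep : extLen cs (ss k * conjSeqW x ss k * ss k)
          = extLen cs (conjSeqW x ss k) := by
        have h0 := hlen k hk'
        rw [show conjSeqW x ss (k + 1) = ss k * conjSeqW x ss k * ss k from rfl] at h0
        rw [h0, ih1]
      constructor
      · show extLen cs (ss k * conjSeqW x ss k * ss k) = extLen cs x
        rw [hstep, ih1]
      · show T.repr z (ss k * conjSeqW x ss k * ss k) = T.repr z x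
        rw [stepEq cs hφ T q hTleft hTright z hzc (hsimp k hk') hstep, ih2]
  rw [hx']
  exact (main n le_rfl).2.symm
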